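/- Let Γ₀ ≤ Γ with [Γ : Γ₀] = ∞, let Γ₀ ↷ A₀ be an action by automorphisms with coinduced group G = A₀^{(I)} ⋊ Γ, I = Γ/Γ₀. Then the one-sided commensurator of Γ in G equals Γ, i.e. Comm_G^{(1)}(Γ) := {g ∈ G : [Γ : gΓg⁻¹ ∩ Γ] < ∞} = Γ. -/

import Mathlib

/-- The restricted direct sum `⊕_{i ∈ I} A₀`. -/
def finSupp (I A₀ : Type*) [Group A₀] : Subgroup (I → A₀) where
  carrier := {x | (Function.mulSupport x).Finite}
  one_mem' := by
    have : Function.mulSupport (1 : I → A₀) = ∅ := Function.mulSupport_one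
    simp [Set.mem_setOf_eq, this]
  mul_mem' := by
    intro x y hx hy
    exact (Set.Finite.union hx hy).subset (Function.mulSupport_mul x y)
  inv_mem' := by
    intro x hx
    simpa [Function.mulSupport_inv] using hx

section Aux

variable {Γ A₀ : Type*} [Group Γ] [Group A₀] (Γ₀ : Subgroup Γ)
  (σ : Γ →* MulAut (finSupp (Γ ⧸ Γ₀) A₀))

/-- The stabilizer of `a` under the action `σ`. -/
def sigmaStab (a : finSupp (Γ ⧸ Γ₀) A₀) : Subgroup Γ where
  carrier := {ε | σ ε a = a}
  one_mem' := by simp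
  mul_mem' := by
    intro x y hx hy
    simp only [Set.mem_setOf_eq] at *
    rw [map_mul, MulAut.mul_apply, hy, hx]
  inv_mem' := by
    intro x hx
    simp only [Set.mem_setOf_eq] at *
    nth_rewrite 1 [← hx]
    rw [← MulAut.mul_apply, ← map_mul, inv_mul_cancel, map_one, MulAut.one_apply]

/-- The setwise stabilizer of a set `F` of indices. -/
def setStab (F : Set (Γ ⧸ Γ₀)) : Subgroup Γ where
  carrier := {ε | ∀ i, ε • i ∈ F ↔ i ∈ F}
  one_mem' := by intro i; simp
  mul_mem' := by
    intro x y hx hy i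
    rw [mul_smul]
    exact (hx _).trans (hy i)
  inv_mem' := by
    intro x hx i
    constructor
    · intro h
      have := (hx (x⁻¹ • i)).mpr h
      rwa [smul_inv_smul] at this
    · intro h
      have := (hx (x⁻¹ • i)).mp
      rw [smul_inv_smul] at this
      exact this h

/-- The pointwise stabilizer of a set `F` of indices. -/
def ptStab (F : Set (Γ ⧸ Γ₀)) : Subgroup Γ where
  carrier := {ε | ∀ i ∈ F, ε • i = i}
  one_mem' := by intro i _; simp
  mul_mem' := by
    intro x y hx hy i hi
    rw [mul_smul, hy i hi, hx i hi]
  inv_mem' := by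
    intro x hx i hi
    rw [← hx i hi, inv_smul_smul, hx i hi]

theorem ptStab_le_setStab (F : Set (Γ ⧸ Γ₀)) : ptStab Γ₀ F ≤ setStab Γ₀ F := by
  intro x hx i
  constructor
  · intro h
    have h2 : x • (x • i) = x • i := hx _ h
    have := smul_left_cancel x h2
    rwa [this] at h
  · intro h
    rw [hx i h]; exact h

/-- The pointwise stabilizer of a finite set has finite relative index in the setwise
stabilizer. -/
theorem ptStab_relindex_ne_zero (F : Set (Γ ⧸ Γ₀)) (hF : F.Finite) :
    (ptStab Γ₀ F).relIndex (setStab Γ₀ F) ≠ 0 := by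
  classical
  haveI : Finite F := hF.to_subtype
  -- the permutation representation of the setwise stabilizer on `F`
  set T := setStab Γ₀ F
  have hmem : ∀ (ε : T) (i : Γ ⧸ Γ₀), i ∈ F → (ε : Γ) • i ∈ F := fun ε i hi => (ε.2 i).mpr hi
  have hmem' : ∀ (ε : T) (i : Γ ⧸ Γ₀), i ∈ F → (ε : Γ)⁻¹ • i ∈ F := by
    intro ε i hi
    exact (((T.inv_mem ε.2)) i).mpr hi
  let φ : T →* Equiv.Perm F :=
    { toFun := fun ε =>
        { toFun := fun i => ⟨(ε : Γ) • (i : Γ ⧸ Γ₀), hmem ε _ i.2⟩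
          invFun := fun i => ⟨(ε : Γ)⁻¹ • (i : Γ ⧸ Γ₀), hmem' ε _ i.2⟩
          left_inv := by intro i; ext; simp
          right_inv := by intro i; ext; simp }
      map_one' := by
        ext i
        simp
      map_mul' := by
        intro x y
        ext i
        simp [mul_smul] }
  have hker : φ.ker ≤ (ptStab Γ₀ F).subgroupOf T := by
    intro ε hε
    have : ∀ i : F, φ ε i = i := fun i => by rw [hε]; rfl
    intro i hi
    exact congrArg Subtype.val (this ⟨i, hi⟩)
  have h1 : φ.ker.index ≠ 0 := by
    rw [Subgroup.index_ker]
    haveI : Nonempty φ.range := ⟨1, 1, map_one φ⟩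
    exact Nat.card_pos.ne'
  have h2 : ((ptStab Γ₀ F).subgroupOf T).index ∣ φ.ker.index :=
    Subgroup.index_dvd_of_le hker
  exact fun h => h1 (Nat.eq_zero_of_zero_dvd (h ▸ h2))

end Aux

/-- Let `Γ₀ ≤ Γ` with `[Γ : Γ₀] = ∞`, and let `G = A₀^{(I)} ⋊ Γ` be the coinduced group of an
action `Γ₀ ↷ A₀` (abstractly: a semidirect product for an action `σ` of `Γ` on the restricted
direct sum over `I = Γ ⧸ Γ₀` which permutes the coordinates with base automorphisms).
Then the one-sided commensurator of `Γ` in `G` equals `Γ`: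
`{g ∈ G : [Γ : gΓg⁻¹ ∩ Γ] < ∞} = Γ`. -/
theorem stmt4 {Γ A₀ : Type*} [Group Γ] [Group A₀] (Γ₀ : Subgroup Γ)
    (hΓ₀ : Γ₀.index = 0)
    (σ : Γ →* MulAut (finSupp (Γ ⧸ Γ₀) A₀))
    (hσ : ∀ (g : Γ) (i : Γ ⧸ Γ₀), ∃ τ : MulAut A₀, ∀ x : finSupp (Γ ⧸ Γ₀) A₀,
      ((σ g x : (Γ ⧸ Γ₀) → A₀)) (g • i) = τ ((x : (Γ ⧸ Γ₀) → A₀) i)) :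
    ∀ g : finSupp (Γ ⧸ Γ₀) A₀ ⋊[σ] Γ,
      (Subgroup.map (MulAut.conj g).toMonoidHom
          (SemidirectProduct.inr (φ := σ)).range).relIndex
        (SemidirectProduct.inr (φ := σ)).range ≠ 0
        ↔ g ∈ (SemidirectProduct.inr (φ := σ)).range := by
  intro g
  set a := g.left with ha
  set γ := g.right with hγ
  set R := (SemidirectProduct.inr (φ := σ)).range with hR
  -- membership in `R` is having trivial left component
  have hmemR : ∀ x : finSupp (Γ ⧸ Γ₀) A₀ ⋊[σ] Γ, x ∈ R ↔ x.left = 1 := by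
    intro x
    constructor
    · rintro ⟨δ, rfl⟩; rfl
    · intro h
      exact ⟨x.right, by ext <;> simp [h]⟩
  -- the key computation: the relative index equals the index of `sigmaStab Γ₀ σ a`
  have hcomap : Subgroup.comap (SemidirectProduct.inr (φ := σ))
      (Subgroup.map (MulAut.conj g).toMonoidHom R) = sigmaStab Γ₀ σ a := by
    ext ε
    simp only [Subgroup.mem_comap, Subgroup.mem_map, MonoidHom.mem_range]
    constructor
    · rintro ⟨x, ⟨δ, rfl⟩, hx⟩
      have hl := congrArg SemidirectProduct.left hx
      have hr := congrArg SemidirectProduct.right hx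
      simp only [MulEquiv.coe_toMonoidHom, MulAut.conj_apply] at hl hr
      simp only [SemidirectProduct.mul_left, SemidirectProduct.mul_right,
        SemidirectProduct.inv_left, SemidirectProduct.inv_right,
        SemidirectProduct.right_inr, SemidirectProduct.left_inr,
        map_one, MulAut.one_apply, mul_one] at hl hr
      -- hl : a * σ (γ * δ) (σ γ⁻¹ a⁻¹) = 1, hr : γ * δ * γ⁻¹ = ε
      show σ ε a = a
      rw [← hr]
      have : (σ (γ * δ * γ⁻¹)) a = a := by
        have h2 : σ (γ * δ) ((σ γ⁻¹) a⁻¹) = a⁻¹ := by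
          have := mul_eq_one_iff_inv_eq.mp hl
          rw [← this]
        have h3 : σ (γ * δ * γ⁻¹) a⁻¹ = a⁻¹ := by
          rw [map_mul, MulAut.mul_apply]
          exact h2
        have := congrArg (·⁻¹) h3
        simpa using this
      exact this
    · intro hε
      refine ⟨SemidirectProduct.inr (γ⁻¹ * ε * γ), ⟨γ⁻¹ * ε * γ, rfl⟩, ?_⟩
      have hσε : σ ε a = a := hε
      have hleft : ((MulAut.conj g).toMonoidHom
          (SemidirectProduct.inr (φ := σ) (γ⁻¹ * ε * γ))).left = 1 := by
        simp only [MulEquiv.coe_toMonoidHom, MulAut.conj_apply,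
          SemidirectProduct.mul_left, SemidirectProduct.mul_right,
          SemidirectProduct.inv_left, SemidirectProduct.inv_right,
          SemidirectProduct.right_inr, SemidirectProduct.left_inr,
          map_one, MulAut.one_apply, mul_one]
        show a * (σ (γ * (γ⁻¹ * ε * γ))) ((σ γ⁻¹) a⁻¹) = 1
        have e1 : γ * (γ⁻¹ * ε * γ) = ε * γ := by group
        rw [e1, map_mul, MulAut.mul_apply]
        have e2 : (σ γ) ((σ γ⁻¹) a⁻¹) = a⁻¹ := by
          rw [← MulAut.mul_apply, ← map_mul, mul_inv_cancel, map_one, MulAut.one_apply]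
        rw [e2, map_inv, hσε, mul_inv_cancel]
      have hright : ((MulAut.conj g).toMonoidHom
          (SemidirectProduct.inr (φ := σ) (γ⁻¹ * ε * γ))).right = ε := by
        simp only [MulEquiv.coe_toMonoidHom, MulAut.conj_apply,
          SemidirectProduct.mul_right, SemidirectProduct.inv_right,
          SemidirectProduct.right_inr]
        show γ * (γ⁻¹ * ε * γ) * γ⁻¹ = ε
        group
      exact SemidirectProduct.ext
        (by rw [hleft, SemidirectProduct.left_inr])
        (by rw [hright, SemidirectProduct.right_inr])
  have hrelindex : (Subgroup.map (MulAut.conj g).toMonoidHom R).relIndex R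
      = (sigmaStab Γ₀ σ a).index := by
    have h1 : R = Subgroup.map (SemidirectProduct.inr (φ := σ)) ⊤ := by
      rw [← MonoidHom.range_eq_map]
    nth_rewrite 2 [h1]
    rw [← Subgroup.relIndex_comap, hcomap, Subgroup.relIndex_top_right]
  rw [hrelindex, hmemR]
  constructor
  · -- if the index is nonzero then `a = 1`
    intro hind
    by_contra ha1
    apply hind
    -- `a ≠ 1`, let `F` be its (finite, nonempty) support
    set F : Set (Γ ⧸ Γ₀) := Function.mulSupport (a : (Γ ⧸ Γ₀) → A₀) with hF
    have hFfin : F.Finite := a.2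
    have hFne : F.Nonempty := by
      rw [Function.mulSupport_nonempty_iff]
      intro h
      apply ha1
      exact Subtype.ext h
    obtain ⟨i₀, hi₀⟩ := hFne
    -- `sigmaStab ≤ setStab F`
    have hST : sigmaStab Γ₀ σ a ≤ setStab Γ₀ F := by
      intro ε hε i
      obtain ⟨τ, hτ⟩ := hσ ε i
      have h1 : (a : (Γ ⧸ Γ₀) → A₀) (ε • i) = τ ((a : (Γ ⧸ Γ₀) → A₀) i) := by
        have := hτ a
        rwa [show σ ε a = a from hε] at this
      simp only [Function.mem_mulSupport, F, h1]
      exact map_ne_one_iff τ τ.injective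
    -- the pointwise stabilizer has index zero since it lies in a point stabilizer
    have hPzero : (ptStab Γ₀ F).index = 0 := by
      have hle : ptStab Γ₀ F ≤ MulAction.stabilizer Γ i₀ := by
        intro x hx
        exact hx i₀ hi₀
      have hstab : (MulAction.stabilizer Γ i₀).index = 0 := by
        rw [MulAction.index_stabilizer_of_transitive, ← Subgroup.index_eq_card]
        exact hΓ₀
      exact Nat.eq_zero_of_zero_dvd (hstab ▸ Subgroup.index_dvd_of_le hle)
    -- hence the setwise stabilizer has index zero
    have hTzero : (setStab Γ₀ F).index = 0 := by
      have := Subgroup.relIndex_mul_index (ptStab_le_setStab Γ₀ F)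
      rw [hPzero] at this
      rcases Nat.mul_eq_zero.mp this with h | h
      · exact absurd h (ptStab_relindex_ne_zero Γ₀ F hFfin)
      · exact h
    exact Nat.eq_zero_of_zero_dvd (hTzero ▸ Subgroup.index_dvd_of_le hST)
  · -- if `a = 1` then the stabilizer is everything
    intro h1
    have : sigmaStab Γ₀ σ a = ⊤ := by
      ext ε
      simp only [Subgroup.mem_top, iff_true]
      show σ ε a = a
      have h2 : a = 1 := h1
      rw [h2, map_one]
    rw [this, Subgroup.index_top]
    exact one_ne_zero
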